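/- There exists a coloring f of the finite subsets of the natural numbers into the natural numbers such that no infinite set A ⊆ ℕ is free for f. -/
import Mathlib

/-- There exists a coloring of the finite subsets of ℕ into ℕ
admitting no infinite free set. -/
theorem stmt2 :
    ∃ f : Finset ℕ → ℕ,
      ∀ A : Set ℕ, A.Infinite →
        ¬ (∀ s : Finset ℕ, ↑s ⊆ A → f s ∈ A → f s ∈ s) := by
  refine ⟨fun s => s.card, fun A hA h => ?_⟩
  obtain ⟨n, hn⟩ := hA.nonempty
  obtain ⟨s, hsA, hcard⟩ := (hA.diff (Set.finite_singleton n)).exists_subset_card_eq n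
  have hs : ↑s ⊆ A := hsA.trans (Set.diff_subset)
  have := h s hs (by simpa [hcard] using hn)
  simp only [hcard] at this
  exact (hsA this).2 rfl
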